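/- arXiv:0906.1019 — 9 statements merged into one kernel-verified Lean document; each statement's English description precedes it below -/
import Mathlib

section
/- Let D be a continuous probability distribution on [0,∞) with cdf F, pdf f, and monotone (non-decreasing) hazard rate h(x) = f(x)/(1-F(x)). If r > 0 satisfies h(r) = 1/r (the reserve price), then F(r) ≤ 1 - 1/e. -/
open Real MeasureTheory

/-- An MHR distribution's cdf at the reserve price is at most `1 - 1/e`. -/
theorem stmt_0 (f F h : ℝ → ℝ)
    (hmono : MonotoneOn h (Set.Ici 0))
    (hhaz : ∀ x ∈ Set.Ici (0:ℝ), h x = f x / (1 - F x))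
    (hF : ∀ x ∈ Set.Ici (0:ℝ), F x = 1 - Real.exp (-∫ t in (0:ℝ)..x, h t))
    (hint : ∀ x : ℝ, IntervalIntegrable h volume 0 x)
    (r : ℝ) (hr : 0 < r) (hres : h r = 1 / r) :
    F r ≤ 1 - 1 / Real.exp 1 := by
  have hFr : F r = 1 - Real.exp (-∫ t in (0:ℝ)..r, h t) := hF r (le_of_lt hr)
  have hle : (∫ t in (0:ℝ)..r, h t) ≤ 1 := by
    have : (∫ t in (0:ℝ)..r, h t) ≤ ∫ t in (0:ℝ)..r, h r := by
      apply intervalIntegral.integral_mono_on (le_of_lt hr) (hint r)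
        (intervalIntegrable_const)
      intro x hx
      exact hmono hx.1 (le_of_lt hr) hx.2
    calc (∫ t in (0:ℝ)..r, h t) ≤ ∫ t in (0:ℝ)..r, h r := this
      _ = r * h r := by simp [mul_comm]
      _ = 1 := by rw [hres]; field_simp
  rw [hFr]
  have : Real.exp (-1) ≤ Real.exp (-∫ t in (0:ℝ)..r, h t) :=
    Real.exp_le_exp.2 (by linarith)
  rw [Real.exp_neg] at this
  have h1 : 1 / Real.exp 1 = (Real.exp 1)⁻¹ := one_div _
  linarith
end

section
/- Let h : [0,r] → [0,∞) be non-decreasing with h(r) = 1/r, and define F(y) = 1 - exp(-∫_0^y h(z) dz). Suppose F(r) = φ where φ ∈ [0, 1-1/e]. Let t = r(1 + ln(1-φ)) and define G(y) = 0 for y ∈ [0,t) and G(y) = 1 - exp(-(y-t)/r) for y ∈ [t,r]. Then F(y) ≥ G(y) for all y ∈ [0,r]. -/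
open Real MeasureTheory

/-- Any MHR cdf `F` with reserve price `r` and `F r = φ` dominates the extremal
cdf `G_{φ,r}` pointwise on `[0,r]`. -/
theorem stmt_2 (r φ t : ℝ) (hr : 0 < r)
    (hφmem : φ ∈ Set.Icc 0 (1 - 1 / Real.exp 1))
    (h F G : ℝ → ℝ)
    (hmono : MonotoneOn h (Set.Icc 0 r))
    (hnn : ∀ x ∈ Set.Icc 0 r, 0 ≤ h x)
    (hres : h r = 1 / r)
    (hint : IntervalIntegrable h volume 0 r)
    (hF : ∀ y ∈ Set.Icc 0 r, F y = 1 - Real.exp (-∫ z in (0:ℝ)..y, h z))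
    (hφ : F r = φ)
    (ht : t = r * (1 + Real.log (1 - φ)))
    (hG : ∀ y, G y = if y < t then 0 else 1 - Real.exp (-(y - t) / r)) :
    ∀ y ∈ Set.Icc 0 r, G y ≤ F y := by
  intro y hy
  obtain ⟨hy0, hyr⟩ := hy
  obtain ⟨hφ0, hφ1⟩ := hφmem
  have hφlt : φ < 1 := lt_of_le_of_lt hφ1 (by
    have : 0 < 1 / Real.exp 1 := by positivity
    linarith)
  have h1φ : 0 < 1 - φ := by linarith
  -- integrability on subintervals
  have hint0y : IntervalIntegrable h volume 0 y :=
    hint.mono_set (by rw [Set.uIcc_of_le hy0, Set.uIcc_of_le hr.le]; exact Set.Icc_subset_Icc le_rfl hyr)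
  have hintyr : IntervalIntegrable h volume y r :=
    hint.mono_set (by rw [Set.uIcc_of_le hyr, Set.uIcc_of_le hr.le]; exact Set.Icc_subset_Icc hy0 le_rfl)
  have hFy := hF y ⟨hy0, hyr⟩
  rw [hG y]
  split_ifs with hlt
  · -- G y = 0 ≤ F y
    rw [hFy]
    have hI : 0 ≤ ∫ z in (0:ℝ)..y, h z := by
      apply intervalIntegral.integral_nonneg hy0
      intro u hu; exact hnn u ⟨hu.1, hu.2.trans hyr⟩
    have : Real.exp (-∫ z in (0:ℝ)..y, h z) ≤ 1 := by
      rw [← Real.exp_zero]; exact Real.exp_le_exp.mpr (by linarith)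
    linarith
  · -- key inequality
    push_neg at hlt
    have hIr : (∫ z in (0:ℝ)..r, h z) = -Real.log (1 - φ) := by
      have := hF r ⟨hr.le, le_rfl⟩
      rw [hφ] at this
      have hexp : Real.exp (-∫ z in (0:ℝ)..r, h z) = 1 - φ := by linarith
      have := Real.log_exp (-∫ z in (0:ℝ)..r, h z)
      rw [hexp] at this
      linarith
    have hsplit : (∫ z in (0:ℝ)..y, h z) = (∫ z in (0:ℝ)..r, h z) - ∫ z in y..r, h z := by
      rw [← intervalIntegral.integral_add_adjacent_intervals hint0y hintyr]; ring
    have hub : (∫ z in y..r, h z) ≤ (r - y) / r := by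
      have : (∫ z in y..r, h z) ≤ ∫ z in y..r, (1:ℝ)/r := by
        apply intervalIntegral.integral_mono_on hyr hintyr (intervalIntegrable_const)
        intro u hu
        rw [← hres]
        exact hmono ⟨hy0.trans hu.1, hu.2⟩ ⟨hr.le, le_rfl⟩ hu.2
      rw [intervalIntegral.integral_const] at this
      rw [smul_eq_mul] at this
      calc (∫ z in y..r, h z) ≤ (r - y) * (1/r) := this
        _ = (r - y) / r := by ring
    have hkey : (y - t) / r ≤ ∫ z in (0:ℝ)..y, h z := by
      rw [hsplit, hIr, ht]
      have : (y - r * (1 + Real.log (1 - φ))) / r = y/r - 1 - Real.log (1-φ) := by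
        field_simp; ring
      rw [this]
      have : (r - y)/r = 1 - y/r := by field_simp
      linarith [hub.trans_eq this]
    rw [hFy, neg_div]
    have := Real.exp_le_exp.mpr (neg_le_neg hkey)
    linarith
end

section
/- Fix r > 0, φ ∈ [0, 1-1/e), and integer k ≥ 1. Let t = r(1 + ln(1-φ)) and let G(x) = 1 - e^{-(x-t)/r} for x ∈ [t,r], G(x) = 0 for x ∈ [0,t). Then ∫_0^r x d(G^k)(x) = r·(φ^k + ln(1-φ) + Σ_{i=1}^{k} φ^i / i). -/
open Real MeasureTheory

/-- The truncated expected maximum of `k` i.i.d. draws from the extremal cdf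
`G_{φ,r}` equals `r(φ^k + ln(1-φ) + Σ_{i=1}^k φ^i/i)`. -/
theorem stmt_6 (r φ t : ℝ) (hr : 0 < r)
    (hφ : φ ∈ Set.Ico 0 (1 - 1 / Real.exp 1))
    (ht : t = r * (1 + Real.log (1 - φ))) (k : ℕ) (hk : 1 ≤ k)
    (G : ℝ → ℝ)
    (hG : ∀ x, G x = if x < t then 0 else 1 - Real.exp (-(x - t) / r)) :
    ∫ x in (0:ℝ)..r, x * deriv (fun y => G y ^ k) x
      = r * (φ ^ k + Real.log (1 - φ)
          + ∑ i ∈ Finset.range k, φ ^ (i + 1) / ((i : ℝ) + 1)) := by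
  obtain ⟨hφ0, hφ1⟩ := hφ
  have hr' : r ≠ 0 := ne_of_gt hr
  have hepos : (0:ℝ) < 1 / Real.exp 1 := by positivity
  have h1φ : (0:ℝ) < 1 - φ := by
    have : φ < 1 := by linarith
    linarith
  have hlog : Real.log (1 - φ) ≤ 0 := Real.log_nonpos (by linarith) (by linarith)
  have hlogge : -1 < Real.log (1 - φ) := by
    have : Real.log (1 / Real.exp 1) < Real.log (1 - φ) :=
      Real.log_lt_log hepos (by linarith)
    rwa [Real.log_div one_ne_zero (Real.exp_ne_zero 1), Real.log_one, Real.log_exp,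
      zero_sub] at this
  have h0t : 0 ≤ t := by
    rw [ht]; nlinarith
  have htr : t ≤ r := by
    rw [ht]; nlinarith
  -- the smooth extension and its derivative
  set g : ℝ → ℝ := fun x => 1 - Real.exp (-(x - t) / r) with hg_def
  have hE : ∀ x, Real.exp (-(x - t) / r) = 1 - g x := by intro x; simp [hg_def]
  have hg : ∀ x : ℝ, HasDerivAt g (Real.exp (-(x - t) / r) / r) x := by
    intro x
    have h1 : HasDerivAt (fun y : ℝ => -(y - t) / r) (-1 / r) x := by
      simpa using (((hasDerivAt_id x).sub_const t).neg).div_const r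
    have h2 := h1.exp
    have h3 := (hasDerivAt_const x (1:ℝ)).sub h2
    refine h3.congr_deriv ?_
    ring
  set d : ℝ → ℝ := fun x =>
    x * ((k : ℝ) * g x ^ (k - 1) * (Real.exp (-(x - t) / r) / r)) with hd_def
  have hdcont : Continuous d := by
    apply Continuous.mul continuous_id
    apply Continuous.mul (continuous_const.mul (by fun_prop))
    fun_prop
  -- antiderivative H of d
  set H : ℝ → ℝ := fun x =>
    x * g x ^ k - x + r * ∑ i ∈ Finset.range k, g x ^ (i + 1) / ((i : ℝ) + 1) with hH_def
  have hHderiv : ∀ x : ℝ, HasDerivAt H (d x) x := by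
    intro x
    have hsum : HasDerivAt (fun y => ∑ i ∈ Finset.range k, g y ^ (i + 1) / ((i : ℝ) + 1))
        (∑ i ∈ Finset.range k, g x ^ i * (Real.exp (-(x - t) / r) / r)) x := by
      apply HasDerivAt.fun_sum
      intro i _
      have h1 := ((hg x).fun_pow (i + 1)).div_const ((i : ℝ) + 1)
      refine h1.congr_deriv ?_
      have hi : (i : ℝ) + 1 ≠ 0 := by positivity
      simp only [Nat.add_sub_cancel]
      push_cast
      field_simp
    have h2 := (((hasDerivAt_id x).mul ((hg x).fun_pow k)).sub (hasDerivAt_id x)).add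
      (hsum.const_mul r)
    have hrr : r * r⁻¹ = 1 := mul_inv_cancel₀ hr'
    have hgeo2 : (∑ i ∈ Finset.range k, g x ^ i) * (1 - g x) = 1 - g x ^ k := by
      linear_combination -geom_sum_mul (g x) k
    refine h2.congr_deriv ?_
    symm
    rw [← Finset.sum_mul, hd_def]
    simp only [id]
    linear_combination (-((∑ i ∈ Finset.range k, g x ^ i) * Real.exp (-(x - t) / r))) * hrr
      - (∑ i ∈ Finset.range k, g x ^ i) * (hE x) - hgeo2
  -- values of g at t and r
  have hgt : g t = 0 := by simp [hg_def]
  have hgr : g r = φ := by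
    have h1 : -(r - t) / r = Real.log (1 - φ) := by
      rw [ht]; field_simp; ring
    rw [hg_def]
    simp only
    rw [h1, Real.exp_log h1φ]
    ring
  have hk0 : k ≠ 0 := by omega
  -- a.e. x ≠ t
  have haet : ∀ᵐ x : ℝ, x ≠ t := by
    rw [MeasureTheory.ae_iff]
    have : {x : ℝ | ¬ x ≠ t} = {t} := by ext x; simp
    rw [this]
    exact measure_singleton t
  -- the integrand equals `if x ≤ t then 0 else d x` a.e.
  set f2 : ℝ → ℝ := fun x => if x ≤ t then 0 else d x with hf2_def
  have hcong : ∀ x : ℝ, x ≠ t → x * deriv (fun y => G y ^ k) x = f2 x := by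
    intro x hx
    rcases lt_or_gt_of_ne hx with hlt | hgt'
    · have hev : (fun y => G y ^ k) =ᶠ[nhds x] (fun _ => (0:ℝ)) := by
        filter_upwards [Iio_mem_nhds hlt] with y hy
        simp only [Set.mem_Iio] at hy
        rw [hG y, if_pos hy, zero_pow hk0]
      rw [hev.deriv_eq, deriv_const, hf2_def]
      simp [hlt.le]
    · have hev : (fun y => G y ^ k) =ᶠ[nhds x] (fun y => g y ^ k) := by
        filter_upwards [Ioi_mem_nhds hgt'] with y hy
        simp only [Set.mem_Ioi] at hy
        rw [hG y, if_neg (not_lt.mpr (le_of_lt hy))]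
      rw [hev.deriv_eq, ((hg x).fun_pow k).deriv, hf2_def]
      simp [not_le.mpr hgt', hd_def]
  have hstep1 : (∫ x in (0:ℝ)..r, x * deriv (fun y => G y ^ k) x) = ∫ x in (0:ℝ)..r, f2 x := by
    apply intervalIntegral.integral_congr_ae
    filter_upwards [haet] with x hx _
    exact hcong x hx
  -- integrability of f2 on the two pieces
  have hint1 : IntervalIntegrable f2 volume 0 t := by
    apply (intervalIntegrable_const (c := (0:ℝ))).congr_ae
    rw [Filter.EventuallyEq, ae_restrict_iff' measurableSet_uIoc]
    apply Filter.Eventually.of_forall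
    intro x hx
    rw [Set.uIoc_of_le h0t] at hx
    rw [hf2_def]
    simp [hx.2]
  have hint2 : IntervalIntegrable f2 volume t r := by
    apply (hdcont.intervalIntegrable t r).congr_ae
    rw [Filter.EventuallyEq, ae_restrict_iff' measurableSet_uIoc]
    apply Filter.Eventually.of_forall
    intro x hx
    rw [Set.uIoc_of_le htr] at hx
    rw [hf2_def]
    simp [not_le.mpr hx.1]
  have hsplit : (∫ x in (0:ℝ)..r, f2 x) = (∫ x in (0:ℝ)..t, f2 x) + ∫ x in t..r, f2 x :=
    (intervalIntegral.integral_add_adjacent_intervals hint1 hint2).symm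
  have hzero : (∫ x in (0:ℝ)..t, f2 x) = 0 := by
    have h : (∫ x in (0:ℝ)..t, f2 x) = ∫ x in (0:ℝ)..t, (0:ℝ) := by
      apply intervalIntegral.integral_congr
      intro x hx
      rw [Set.uIcc_of_le h0t] at hx
      rw [hf2_def]
      simp [hx.2]
    simp [h]
  have hmain : (∫ x in t..r, f2 x) = ∫ x in t..r, d x := by
    apply intervalIntegral.integral_congr_ae
    apply Filter.Eventually.of_forall
    intro x hx
    rw [Set.uIoc_of_le htr] at hx
    rw [hf2_def]
    simp [not_le.mpr hx.1]
  have hftc : (∫ x in t..r, d x) = H r - H t :=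
    intervalIntegral.integral_eq_sub_of_hasDerivAt (fun x _ => hHderiv x)
      (hdcont.intervalIntegrable t r)
  have hHt : H t = -t := by
    rw [hH_def]
    simp [hgt, zero_pow hk0]
  have hHr : H r = r * φ ^ k - r + r * ∑ i ∈ Finset.range k, φ ^ (i + 1) / ((i : ℝ) + 1) := by
    rw [hH_def]; simp [hgr]
  rw [hstep1, hsplit, hzero, hmain, hftc, hHt, hHr, ht]
  ring
end

section
/- Let α = 1 - 1/e, c = e/(e-1) = 1/α, and k ≥ 1. If m = ⌊log_c(2k)⌋ + 2, then for all x ∈ [0, α]: x^{m-1}(1-x) ≤ 1/(k+m). -/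
open Real

lemma aux_geom (c : ℝ) (hc : (1.58:ℝ) < c) (n : ℕ) : 1 + 0.58 * (n:ℝ) ≤ c ^ n := by
  have h := one_add_mul_le_pow (a := c - 1) (by linarith) n
  rw [show (1 + (c-1)) = c by ring] at h
  have hn : (0:ℝ) ≤ n := Nat.cast_nonneg n
  nlinarith

/-- With `m = ⌊log_c (2k)⌋ + 2` where `c = e/(e-1) = 1/α`, one has
`x^{m-1}(1-x) ≤ 1/(k+m)` for all `x ∈ [0, α]`, `α = 1 - 1/e`. -/
theorem stmt_9 (k : ℕ) (hk : 1 ≤ k)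
    (m : ℕ)
    (hm : m = ⌊Real.logb (Real.exp 1 / (Real.exp 1 - 1)) (2 * (k : ℝ))⌋₊ + 2) :
    ∀ x ∈ Set.Icc (0:ℝ) (1 - 1 / Real.exp 1),
      x ^ (m - 1) * (1 - x) ≤ 1 / ((k : ℝ) + m) := by
  intro x hx
  obtain ⟨hx0, hxu⟩ := hx
  have he1 : (2.718 : ℝ) < Real.exp 1 := by
    have := Real.exp_one_gt_d9; linarith
  have he2 : Real.exp 1 < 2.719 := by
    have := Real.exp_one_lt_d9; linarith
  set c : ℝ := Real.exp 1 / (Real.exp 1 - 1) with hc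
  have hcl : (1.58 : ℝ) < c := by
    rw [hc, lt_div_iff₀ (by linarith)]; linarith
  have hcu : c < 1.6 := by
    rw [hc, div_lt_iff₀ (by linarith)]; linarith
  have hc1 : (1:ℝ) < c := by linarith
  set n := ⌊Real.logb c (2*(k:ℝ))⌋₊ with hn
  have hmn : m = n + 2 := hm
  have hk1 : (1:ℝ) ≤ (k:ℝ) := by exact_mod_cast hk
  -- 2k < c^(n+1)
  have hlt : Real.logb c (2*(k:ℝ)) < (n:ℝ) + 1 := Nat.lt_floor_add_one _
  have hkc : 2*(k:ℝ) < c ^ (n+1) := by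
    have h := (Real.logb_lt_iff_lt_rpow hc1 (by linarith : (0:ℝ) < 2*(k:ℝ))).mp hlt
    have : c ^ (((n:ℝ)) + 1) = c ^ (n+1 : ℕ) := by
      rw [← Real.rpow_natCast c (n+1)]; push_cast; ring_nf
    linarith [this ▸ h]
  -- x ≤ 1/c
  have hxc : x ≤ 1 / c := by
    have : 1 - 1 / Real.exp 1 = 1 / c := by
      rw [hc]; field_simp
    linarith [this ▸ hxu]
  have hx1 : x ≤ 1 := by
    have : 1/c < 1 := by rw [div_lt_one (by linarith)]; linarith
    linarith
  -- main bound pieces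
  have hpow : x ^ n ≤ (1/c) ^ n := pow_le_pow_left₀ hx0 hxc n
  have hquad : x * (1 - x) ≤ 1/4 := by nlinarith [sq_nonneg (2*x - 1)]
  have hquad0 : 0 ≤ x * (1 - x) := mul_nonneg hx0 (by linarith)
  have hcn : (0:ℝ) < c ^ n := pow_pos (by linarith) n
  have hprod : x ^ (n+1) * (1 - x) ≤ 1 / (4 * c ^ n) := by
    have : x ^ (n+1) * (1 - x) = x ^ n * (x * (1 - x)) := by ring
    rw [this]
    calc x ^ n * (x * (1 - x)) ≤ (1/c)^n * (1/4) := by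
          apply mul_le_mul hpow hquad hquad0 (by positivity)
      _ = 1 / (4 * c ^ n) := by
          rw [div_pow, one_pow]; field_simp
  -- k + m ≤ 4 c^n
  have hgeom := aux_geom c hcl n
  have hck : 2*(k:ℝ) < 1.6 * c ^ n := by
    have : c ^ (n+1) = c * c ^ n := by ring
    nlinarith
  have hfinal : (k:ℝ) + m ≤ 4 * c ^ n := by
    rw [hmn]; push_cast; nlinarith
  have hkm0 : (0:ℝ) < (k:ℝ) + m := by
    have : (0:ℝ) ≤ (m:ℝ) := Nat.cast_nonneg m
    linarith
  have hmm : m - 1 = n + 1 := by omega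
  rw [hmm]
  calc x ^ (n+1) * (1 - x) ≤ 1 / (4 * c ^ n) := hprod
    _ ≤ 1 / ((k:ℝ) + m) := by
        apply one_div_le_one_div_of_le hkm0; linarith
end

section
/- Let α = 1 - 1/e, k ≥ 1 an integer, and m an integer with m ≥ log_{1/α}(2k) + 2. Define q(x) = x^{k+m} + ln(1-x) + Σ_{i=1}^{k} x^i / i. Then q(x) ≤ 0 for all x ∈ [0, α]. -/
open Real

lemma log_series_le (n : ℕ) {x : ℝ} (hx0 : 0 ≤ x) (hx1 : x < 1) :
    Real.log (1 - x) + ∑ i ∈ Finset.range n, x ^ (i + 1) / ((i : ℝ) + 1) ≤ 0 := by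
  set f : ℝ → ℝ := fun y => Real.log (1 - y) + ∑ i ∈ Finset.range n, y ^ (i + 1) / ((i : ℝ) + 1)
    with hf
  have hderiv : ∀ y ∈ Set.Ico (0:ℝ) 1, HasDerivAt f
      (-(1 - y)⁻¹ + ∑ i ∈ Finset.range n, y ^ i) y := by
    intro y hy
    have h1 : HasDerivAt (fun y : ℝ => 1 - y) (-1) y := by
      simpa using (hasDerivAt_id y).const_sub 1
    have hlog : HasDerivAt (fun y : ℝ => Real.log (1 - y)) (-(1 - y)⁻¹) y := by
      have := (h1.log (by linarith [hy.2] : (1:ℝ) - y ≠ 0))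
      simpa [neg_div, div_eq_mul_inv] using this
    have hsum : HasDerivAt (fun y : ℝ => ∑ i ∈ Finset.range n, y ^ (i + 1) / ((i : ℝ) + 1))
        (∑ i ∈ Finset.range n, y ^ i) y := by
      apply HasDerivAt.fun_sum
      intro i _
      have := (hasDerivAt_pow (i + 1) y).div_const ((i : ℝ) + 1)
      have h2 : ((i : ℝ) + 1) * y ^ i / ((i : ℝ) + 1) = y ^ i := by
        field_simp
      simpa [Nat.cast_add, Nat.cast_one, h2] using this
    exact hlog.fun_add hsum
  by_cases hx : x = 0
  · simp [hf, hx]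
  · have hx0' : 0 < x := lt_of_le_of_ne hx0 (Ne.symm hx)
    have key : AntitoneOn f (Set.Icc 0 x) := by
      apply antitoneOn_of_deriv_nonpos (convex_Icc 0 x)
      · apply ContinuousOn.add
        · apply ContinuousOn.log (by fun_prop)
          intro y hy
          rw [Set.mem_Icc] at hy
          nlinarith [hy.2]
        · fun_prop
      · intro y hy
        rw [interior_Icc] at hy
        exact (hderiv y ⟨hy.1.le, hy.2.trans hx1⟩).differentiableAt.differentiableWithinAt
      · intro y hy
        rw [interior_Icc] at hy
        have hy1 : y < 1 := hy.2.trans hx1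
        rw [(hderiv y ⟨hy.1.le, hy1⟩).deriv]
        have hgeom : ∑ i ∈ Finset.range n, y ^ i = (1 - y ^ n) / (1 - y) := by
          rw [geom_sum_eq (by linarith : y ≠ 1), ← neg_div_neg_eq]
          ring_nf
        rw [hgeom]
        have h1y : (0:ℝ) < 1 - y := by linarith
        have hyn : 0 ≤ y ^ n := pow_nonneg hy.1.le n
        rw [neg_add_le_iff_le_add, add_zero, div_le_iff₀ h1y, inv_mul_cancel₀ h1y.ne']
        nlinarith
    have := key (Set.left_mem_Icc.mpr hx0) (Set.right_mem_Icc.mpr hx0) hx0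
    simpa [hf] using this

/-- For `m ≥ log_{1/α}(2k) + 2` with `α = 1 - 1/e`, the function
`q(x) = x^{k+m} + ln(1-x) + Σ_{i=1}^k x^i/i` is non-positive on `[0, α]`. -/
theorem stmt_10 (k m : ℕ) (hk : 1 ≤ k)
    (hm : Real.logb (Real.exp 1 / (Real.exp 1 - 1)) (2 * (k : ℝ)) + 2 ≤ (m : ℝ)) :
    ∀ x ∈ Set.Icc (0:ℝ) (1 - 1 / Real.exp 1),
      x ^ (k + m) + Real.log (1 - x)
        + ∑ i ∈ Finset.range k, x ^ (i + 1) / ((i : ℝ) + 1) ≤ 0 := by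
  intro x hx
  obtain ⟨hx0, hxα⟩ := hx
  have he : (2:ℝ) < Real.exp 1 := by
    have := Real.exp_one_gt_d9; linarith
  set α : ℝ := 1 - 1 / Real.exp 1 with hα
  have hα0 : 0 < α := by
    have : 1 / Real.exp 1 < 1 := by
      rw [div_lt_one (by linarith)]; linarith
    simp only [hα]; linarith
  have hα1 : α < 1 := by
    have : 0 < 1 / Real.exp 1 := by positivity
    simp only [hα]; linarith
  have hx1 : x < 1 := lt_of_le_of_lt hxα hα1
  set b : ℝ := Real.exp 1 / (Real.exp 1 - 1) with hb
  have hbα : b = α⁻¹ := by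
    rw [hb, hα]
    field_simp
  have hb1 : 1 < b := by
    rw [hbα]
    rw [lt_inv_comm₀ one_pos hα0, inv_one]
    exact hα1
  -- 2k ≤ b ^ (m - 2)
  have h2k : (0:ℝ) < 2 * k := by positivity
  have hlogpos : 0 < Real.logb b (2 * (k : ℝ)) := by
    apply Real.logb_pos hb1
    have : (1:ℝ) ≤ (k:ℝ) := by exact_mod_cast hk
    linarith
  have hm3 : 3 ≤ m := by
    by_contra h
    push_neg at h
    interval_cases m <;> simp_all <;> linarith
  have hrpow : (2 * (k:ℝ)) ≤ b ^ ((m:ℝ) - 2) := by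
    calc (2 * (k:ℝ)) = b ^ Real.logb b (2 * (k:ℝ)) :=
          (Real.rpow_logb (by linarith) (by linarith) h2k).symm
      _ ≤ b ^ ((m:ℝ) - 2) :=
          Real.rpow_le_rpow_of_exponent_le hb1.le (by linarith)
  have hcast : ((m - 2 : ℕ) : ℝ) = (m:ℝ) - 2 := by
    have : (2:ℕ) ≤ m := by omega
    push_cast [Nat.cast_sub this]; ring
  have hpow : (2 * (k:ℝ)) ≤ b ^ (m - 2) := by
    have := hrpow
    rw [← hcast, Real.rpow_natCast] at this
    exact this
  have hαpow : α ^ (m - 2) ≤ 1 / (2 * (k:ℝ)) := by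
    have hαp : 0 < α ^ (m - 2) := pow_pos hα0 _
    rw [hbα, inv_pow] at hpow
    have hinv : α ^ (m - 2) * (α ^ (m - 2))⁻¹ = 1 := mul_inv_cancel₀ hαp.ne'
    rw [le_div_iff₀ h2k]
    nlinarith [hpow, hinv, hαp]
  have hk1 : (1:ℝ) ≤ (k:ℝ) := by exact_mod_cast hk
  have hαm1 : α ^ (m - 1) ≤ 1 / ((k:ℝ) + 1) := by
    have hexp : m - 1 = (m - 2) + 1 := by omega
    rw [hexp, pow_succ]
    calc α ^ (m - 2) * α ≤ (1 / (2 * (k:ℝ))) * 1 :=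
          mul_le_mul hαpow hα1.le hα0.le (by positivity)
      _ ≤ 1 / ((k:ℝ) + 1) := by
          rw [mul_one, div_le_div_iff₀ (by positivity) (by positivity)]
          linarith
  have hxm1 : x ^ (m - 1) ≤ 1 / ((k:ℝ) + 1) :=
    le_trans (pow_le_pow_left₀ hx0 hxα _) hαm1
  have hsplit : x ^ (k + m) = x ^ (k + 1) * x ^ (m - 1) := by
    rw [← pow_add]
    congr 1
    omega
  have hxk1 : (0:ℝ) ≤ x ^ (k + 1) := pow_nonneg hx0 _
  have hmain : x ^ (k + m) ≤ x ^ (k + 1) / ((k:ℝ) + 1) := by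
    rw [hsplit, div_eq_mul_one_div]
    exact mul_le_mul_of_nonneg_left hxm1 hxk1
  have hlog := log_series_le (k + 1) hx0 hx1
  rw [Finset.sum_range_succ] at hlog
  linarith
end

section
/- Let α = 1 - 1/e and k ≥ 1 an integer. Set m = ⌊log_{1/α}((k+1)(1-α))⌋ + 1. Define q(x) = x^{k+m} + ln(1-x) + Σ_{i=1}^{k} x^i / i. Then q(α) > 0. -/
open Real

/-- Lower bound witness: with `α = 1 - 1/e` and
`m = ⌊log_{1/α}((k+1)(1-α))⌋ + 1`, one has `q(α) > 0` where
`q(x) = x^{k+m} + ln(1-x) + Σ_{i=1}^k x^i/i`. -/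
theorem stmt_11 (k : ℕ) (hk : 1 ≤ k)
    (m : ℤ)
    (hm : m = ⌊Real.logb (Real.exp 1 / (Real.exp 1 - 1))
        (((k : ℝ) + 1) * (1 - (1 - 1 / Real.exp 1)))⌋ + 1) :
    0 < (1 - 1 / Real.exp 1) ^ ((k : ℤ) + m)
        + Real.log (1 - (1 - 1 / Real.exp 1))
        + ∑ i ∈ Finset.range k, (1 - 1 / Real.exp 1) ^ (i + 1) / ((i : ℝ) + 1) := by
  have hE1 : 1 < Real.exp 1 := by
    simpa using Real.one_lt_exp_iff_of_pos (x := 1) (by norm_num) |>.mpr one_pos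
  set E := Real.exp 1 with hE
  set α : ℝ := 1 - 1/E with hα
  have hE0 : (0:ℝ) < E := by linarith
  have hα1 : α < 1 := by
    have : 0 < 1/E := by positivity
    simp only [hα]; linarith
  have hα0 : 0 < α := by
    have : 1/E < 1 := by rw [div_lt_one hE0]; linarith
    simp only [hα]; linarith
  -- series for log
  have hsum : HasSum (fun n : ℕ => α ^ (n+1) / (n+1)) (-Real.log (1 - α)) :=
    Real.hasSum_pow_div_log_of_abs_lt_one (by rw [abs_of_pos hα0]; exact hα1)
  set f : ℕ → ℝ := fun n => α ^ (n+1) / (n+1) with hf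
  have hS : Summable f := hsum.summable
  have hsplit : ∑ i ∈ Finset.range k, f i + ∑' n, f (n + k) = -Real.log (1 - α) := by
    rw [Summable.sum_add_tsum_nat_add k hS, hsum.tsum_eq]
  -- tail bound
  set c : ℝ := ((k:ℝ)+1) * (1 - α) with hc
  have hc0 : 0 < c := by
    have : (0:ℝ) < (k:ℝ)+1 := by positivity
    have h1 : 0 < 1 - α := by linarith
    positivity
  set g : ℕ → ℝ := fun n => (α ^ (k+1) / ((k:ℝ)+1)) * α ^ n with hg
  have hgsum : Summable g := (summable_geometric_of_lt_one hα0.le hα1).mul_left _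
  have hgt : ∑' n, g n = α ^ (k+1) / c := by
    rw [hg, tsum_mul_left, tsum_geometric_of_lt_one hα0.le hα1, hc]
    field_simp
  have hfg : ∀ n, f (n + k) ≤ g n := by
    intro n
    simp only [hf, hg]
    have h2 : (0:ℝ) < (k:ℝ) + 1 := by positivity
    have he : α ^ (k+1) / ((k:ℝ)+1) * α ^ n = α ^ (n + k + 1) / ((k:ℝ)+1) := by
      rw [div_mul_eq_mul_div]; ring_nf
    rw [he]
    apply div_le_div_of_nonneg_left (by positivity) h2
    push_cast; linarith
  have htail : ∑' n, f (n + k) < α ^ (k+1) / c := by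
    rw [← hgt]
    refine Summable.tsum_lt_tsum_of_nonneg (i := 1) (fun b => by positivity) hfg ?_ hgsum
    simp only [hf, hg]
    have h2 : (0:ℝ) < (k:ℝ) + 1 := by positivity
    have he : α ^ (k+1) / ((k:ℝ)+1) * α ^ 1 = α ^ (1 + k + 1) / ((k:ℝ)+1) := by
      rw [div_mul_eq_mul_div]; ring_nf
    rw [he]
    apply div_lt_div_of_pos_left (by positivity) h2
    push_cast; linarith
  -- power bound
  have hb1 : 1 < E / (E - 1) := by
    rw [lt_div_iff₀ (by linarith)]; linarith
  have hbα : E / (E - 1) = α⁻¹ := by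
    rw [hα]; field_simp
  have hmle : ((m - 1 : ℤ) : ℝ) ≤ Real.logb (E/(E-1)) c := by
    rw [hm]; push_cast; simp [Int.floor_le]
  have hpow : (E/(E-1)) ^ (m - 1 : ℤ) ≤ c := by
    have h0 : (0:ℝ) < E/(E-1) := by linarith
    calc (E/(E-1)) ^ (m - 1 : ℤ) = (E/(E-1)) ^ ((m - 1 : ℤ) : ℝ) := by
          rw [Real.rpow_intCast]
      _ ≤ (E/(E-1)) ^ Real.logb (E/(E-1)) c :=
          (Real.rpow_le_rpow_left_iff hb1).mpr hmle
      _ = c := Real.rpow_logb h0 (ne_of_gt hb1) hc0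
  have hαm : c⁻¹ ≤ α ^ (m - 1 : ℤ) := by
    have h0 : (0:ℝ) < (E/(E-1)) ^ (m - 1 : ℤ) := zpow_pos (by linarith) _
    have := inv_anti₀ h0 hpow
    rwa [hbα, inv_zpow, inv_inv] at this
  have hkey : α ^ (k+1) / c ≤ α ^ ((k:ℤ) + m) := by
    have : α ^ ((k:ℤ) + m) = α ^ (k+1) * α ^ (m - 1 : ℤ) := by
      rw [← zpow_natCast α (k+1), ← zpow_add₀ (ne_of_gt hα0)]
      congr 1
      push_cast; ring
    rw [this, div_eq_mul_inv]
    exact mul_le_mul_of_nonneg_left hαm (by positivity)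
  -- combine
  have hsum_eq : ∑ i ∈ Finset.range k, α ^ (i + 1) / ((i : ℝ) + 1)
      = ∑ i ∈ Finset.range k, f i := by
    apply Finset.sum_congr rfl
    intro i _
    simp [hf]
  rw [hsum_eq]
  have : ∑ i ∈ Finset.range k, f i = -Real.log (1 - α) - ∑' n, f (n + k) := by
    linarith [hsplit]
  rw [this]
  have := htail.trans_le hkey
  linarith
end

section
/- Let α = 1 - 1/e, let k ≥ 1, and let m ≥ log_{1/α}(2k) + 2 be an integer. Let D be any MHR distribution on [0,∞) with reserve price r (h_D(r) = 1/r) and φ = F_D(r). Then r(1 - φ^m) ≥ (1/φ^k)·∫_0^r x·k·F_D(x)^{k-1} f_D(x) dx, i.e., Gain_D - Loss_D ≥ 0. -/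
open Real MeasureTheory

/-- Single-item upper bound: for any MHR distribution with cdf `F`, density `f`,
hazard rate `h`, reserve price `r` (where `h r = 1/r`) and `φ = F r`, if
`m ≥ log_{1/α}(2k) + 2` (with `α = 1 - 1/e`), then `Gain - Loss ≥ 0`, i.e.
`r(1 - φ^m) ≥ (1/φ^k)·∫_0^r x·k·F(x)^{k-1} f(x) dx`. -/
theorem stmt_15 (k m : ℕ) (hk : 1 ≤ k)
    (hm : Real.logb (Real.exp 1 / (Real.exp 1 - 1)) (2 * (k : ℝ)) + 2 ≤ (m : ℝ))
    (f F h : ℝ → ℝ)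
    (hf0 : ∀ x, 0 ≤ f x)
    (hhaz : ∀ x ∈ Set.Ici (0:ℝ), h x = f x / (1 - F x))
    (hmono : MonotoneOn h (Set.Ici 0))
    (hF : ∀ x ∈ Set.Ici (0:ℝ), F x = 1 - Real.exp (-∫ t in (0:ℝ)..x, h t))
    (hinth : ∀ x : ℝ, IntervalIntegrable h volume 0 x)
    (r : ℝ) (hr : 0 < r) (hres : h r = 1 / r)
    (hderiv : ∀ x ∈ Set.Icc (0:ℝ) r, HasDerivAt F (f x) x)
    (hint : IntervalIntegrable (fun x => x * ((k : ℝ) * F x ^ (k - 1) * f x)) volume 0 r) :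
    (1 / (F r) ^ k) * ∫ x in (0:ℝ)..r, x * ((k : ℝ) * F x ^ (k - 1) * f x)
      ≤ r * (1 - (F r) ^ m) := by
  have hrne : r ≠ 0 := ne_of_gt hr
  -- h is nonnegative on [0, ∞)
  have hh0 : ∀ x ∈ Set.Ici (0:ℝ), 0 ≤ h x := by
    intro x hx
    rw [hhaz x hx]
    apply div_nonneg (hf0 x)
    have h1 : 1 - F x = Real.exp (-∫ t in (0:ℝ)..x, h t) := by
      rw [hF x hx]; ring
    rw [h1]
    positivity
  -- h is bounded by 1/r on [0, r]
  have hhr : ∀ x ∈ Set.Icc (0:ℝ) r, h x ≤ 1 / r := by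
    intro x hx
    rw [← hres]
    exact hmono hx.1 (Set.mem_Ici.mpr hr.le) hx.2
  set A : ℝ := ∫ t in (0:ℝ)..r, h t with hA
  have hA0 : 0 ≤ A := by
    apply intervalIntegral.integral_nonneg hr.le
    intro t ht
    exact hh0 t ht.1
  have hA1 : A ≤ 1 := by
    have h1 : A ≤ ∫ _ in (0:ℝ)..r, (1/r) := by
      apply intervalIntegral.integral_mono_on hr.le (hinth r) intervalIntegrable_const
      intro t ht; exact hhr t ht
    rw [intervalIntegral.integral_const, smul_eq_mul] at h1
    calc A ≤ (r - 0) * (1/r) := h1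
    _ = 1 := by field_simp; ring
  have hFr : F r = 1 - Real.exp (-A) := hF r hr.le
  have hφ0 : 0 ≤ F r := by
    rw [hFr]
    have : Real.exp (-A) ≤ 1 := Real.exp_le_one_iff.mpr (by linarith)
    linarith
  have hφα : F r ≤ 1 - Real.exp (-1) := by
    rw [hFr]
    have : Real.exp (-1) ≤ Real.exp (-A) := Real.exp_le_exp.mpr (by linarith)
    linarith
  have hα1 : (0:ℝ) < 1 - Real.exp (-1) := by
    have : Real.exp (-1) < 1 := Real.exp_lt_one_iff.mpr (by norm_num)
    linarith
  rcases eq_or_lt_of_le hφ0 with hφ | hφ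
  · -- degenerate case F r = 0
    rw [← hφ, zero_pow (by omega : k ≠ 0)]
    have h1 : (0:ℝ)^m ≤ 1 := pow_le_one₀ le_rfl zero_le_one
    simp only [div_zero, zero_mul]
    nlinarith
  -- main case: 0 < F r
  have hφk : (0:ℝ) < F r ^ k := pow_pos hφ k
  have huIcc : Set.uIcc (0:ℝ) r = Set.Icc 0 r := Set.uIcc_of_le hr.le
  have hFcont : ContinuousOn F (Set.Icc 0 r) := fun x hx =>
    (hderiv x hx).continuousAt.continuousWithinAt
  have hFkint : IntervalIntegrable (fun x => F x ^ k) volume 0 r := by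
    apply ContinuousOn.intervalIntegrable
    rw [huIcc]
    exact hFcont.pow k
  -- FTC: integral of derivative of x * F x ^ k
  have key : ∫ x in (0:ℝ)..r, (1 * F x ^ k + x * ((k:ℝ) * F x ^ (k-1) * f x))
      = r * F r ^ k - 0 * F 0 ^ k := by
    apply intervalIntegral.integral_eq_sub_of_hasDerivAt
    · intro x hx
      rw [huIcc] at hx
      exact (hasDerivAt_id x).mul ((hderiv x hx).pow k)
    · apply IntervalIntegrable.add _ hint
      simpa using hFkint
  have hsplit : ∫ x in (0:ℝ)..r, (1 * F x ^ k + x * ((k:ℝ) * F x ^ (k-1) * f x))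
      = (∫ x in (0:ℝ)..r, F x ^ k) + ∫ x in (0:ℝ)..r, x * ((k:ℝ) * F x ^ (k-1) * f x) := by
    rw [← intervalIntegral.integral_add (by simpa using hFkint) hint]
    simp
  have hIBP : (∫ x in (0:ℝ)..r, x * ((k:ℝ) * F x ^ (k-1) * f x))
      = r * F r ^ k - ∫ x in (0:ℝ)..r, F x ^ k := by
    rw [hsplit] at key; linarith [key]
  -- lower bound the integral of F^k
  set J : ℝ := ∫ x in (0:ℝ)..r, F x ^ k with hJ
  -- B x = ∫_0^x h
  have hBF : ∀ x ∈ Set.Icc (0:ℝ) r, A - (r - x)/r ≤ ∫ t in (0:ℝ)..x, h t := by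
    intro x hx
    have hintxr : IntervalIntegrable h volume x r := (hinth x).symm.trans (hinth r)
    have hadd : (∫ t in (0:ℝ)..x, h t) + (∫ t in x..r, h t) = A :=
      intervalIntegral.integral_add_adjacent_intervals (hinth x) hintxr
    have hub : (∫ t in x..r, h t) ≤ (r - x) * (1/r) := by
      have := intervalIntegral.integral_mono_on hx.2 hintxr intervalIntegrable_const
        (fun t ht => hhr t ⟨le_trans hx.1 ht.1, ht.2⟩)
      rw [intervalIntegral.integral_const, smul_eq_mul] at this
      exact this
    have : (r - x) * (1/r) = (r - x)/r := by ring
    linarith [hub, hadd, this]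
  set H : ℝ → ℝ := fun x => 1 - Real.exp (-A) * Real.exp ((r - x)/r) with hHdef
  have hFH : ∀ x ∈ Set.Icc (0:ℝ) r, H x ≤ F x := by
    intro x hx
    rw [hF x hx.1]
    have h1 : Real.exp (-∫ t in (0:ℝ)..x, h t) ≤ Real.exp (-(A - (r - x)/r)) :=
      Real.exp_le_exp.mpr (by linarith [hBF x hx])
    have h2 : Real.exp (-(A - (r - x)/r)) = Real.exp (-A) * Real.exp ((r - x)/r) := by
      rw [← Real.exp_add]; ring_nf
    simp only [hHdef]
    linarith [h1, h2.le, h2.ge]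
  set x₀ : ℝ := r * (1 - A) with hx₀def
  have hx₀0 : 0 ≤ x₀ := mul_nonneg hr.le (by linarith)
  have hx₀r : x₀ ≤ r := by nlinarith
  have hHx₀ : H x₀ = 0 := by
    simp only [hHdef]
    have : (r - x₀)/r = A := by field_simp [hx₀def]; ring
    rw [this, ← Real.exp_add]
    simp
  have hHr : H r = F r := by
    simp only [hHdef]
    rw [hFr]
    norm_num
  have hH0 : ∀ x ∈ Set.Icc x₀ r, 0 ≤ H x := by
    intro x hx
    simp only [hHdef]
    have h1 : (r - x)/r ≤ A := by
      rw [div_le_iff₀ hr]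
      nlinarith [hx.1]
    have h2 : Real.exp (-A) * Real.exp ((r - x)/r) ≤ 1 := by
      rw [← Real.exp_add]
      apply Real.exp_le_one_iff.mpr
      linarith
    linarith
  -- FTC for H: ∫_{x₀}^r H^k (1 - H) = r/(k+1) * (F r)^(k+1)
  have hHderiv : ∀ x, HasDerivAt H ((1 - H x)/r) x := by
    intro x
    have h1 : HasDerivAt (fun x : ℝ => (r - x)/r) (-1/r) x := by
      have := ((hasDerivAt_id x).const_sub r).div_const r
      exact this.congr_deriv (by ring)
    have h2 : HasDerivAt (fun x => Real.exp ((r - x)/r)) (Real.exp ((r-x)/r) * (-1/r)) x :=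
      (Real.hasDerivAt_exp _).comp x h1
    have h3 := ((h2.const_mul (Real.exp (-A))).const_sub 1)
    refine h3.congr_deriv ?_
    simp only [hHdef]
    ring
  have hHcont : Continuous H := by
    have : ∀ x, HasDerivAt H ((1 - H x)/r) x := hHderiv
    exact continuous_iff_continuousAt.mpr fun x => (hHderiv x).continuousAt
  have hPderiv : ∀ x, HasDerivAt (fun x => (r/((k:ℝ)+1)) * H x ^ (k+1))
      (H x ^ k * (1 - H x)) x := by
    intro x
    have h1 := ((hHderiv x).pow (k+1)).const_mul (r/((k:ℝ)+1))
    refine h1.congr_deriv ?_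
    have : (k + 1 - 1) = k := by omega
    rw [this]
    push_cast
    field_simp
  have hFTC2 : ∫ x in x₀..r, H x ^ k * (1 - H x)
      = (r/((k:ℝ)+1)) * F r ^ (k+1) := by
    have := intervalIntegral.integral_eq_sub_of_hasDerivAt
      (f := fun x => (r/((k:ℝ)+1)) * H x ^ (k+1))
      (f' := fun x => H x ^ k * (1 - H x)) (a := x₀) (b := r)
      (fun x _ => hPderiv x)
      (Continuous.intervalIntegrable ((hHcont.pow k).mul (continuous_const.sub hHcont)) x₀ r)
    rw [this]
    simp only [hHr, hHx₀]
    rw [zero_pow (by omega : k + 1 ≠ 0)]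
    ring
  -- compare integrals
  have hIcc_sub : Set.Icc x₀ r ⊆ Set.Icc 0 r := Set.Icc_subset_Icc hx₀0 le_rfl
  have hFkint2 : IntervalIntegrable (fun x => F x ^ k) volume x₀ r := by
    apply ContinuousOn.intervalIntegrable
    rw [Set.uIcc_of_le hx₀r]
    exact (hFcont.mono hIcc_sub).pow k
  have hcomp : ∫ x in x₀..r, H x ^ k * (1 - H x) ≤ ∫ x in x₀..r, F x ^ k := by
    apply intervalIntegral.integral_mono_on hx₀r
      (Continuous.intervalIntegrable ((hHcont.pow k).mul (continuous_const.sub hHcont)) x₀ r) hFkint2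
    intro x hx
    have h0 := hH0 x hx
    have hHF := hFH x (hIcc_sub hx)
    have h1 : H x ^ k * (1 - H x) ≤ H x ^ k * 1 := by
      apply mul_le_mul_of_nonneg_left _ (pow_nonneg h0 k)
      linarith
    have h2 : H x ^ k ≤ F x ^ k := pow_le_pow_left₀ h0 hHF k
    show H x ^ k * (1 - H x) ≤ F x ^ k
    linarith
  have hJlow : (r/((k:ℝ)+1)) * F r ^ (k+1) ≤ J := by
    have hFkint1 : IntervalIntegrable (fun x => F x ^ k) volume 0 x₀ := by
      apply ContinuousOn.intervalIntegrable
      rw [Set.uIcc_of_le hx₀0]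
      exact (hFcont.mono (Set.Icc_subset_Icc le_rfl hx₀r)).pow k
    have hadd : (∫ x in (0:ℝ)..x₀, F x ^ k) + (∫ x in x₀..r, F x ^ k) = J :=
      intervalIntegral.integral_add_adjacent_intervals hFkint1 hFkint2
    have hpos : 0 ≤ ∫ x in (0:ℝ)..x₀, F x ^ k := by
      apply intervalIntegral.integral_nonneg hx₀0
      intro t ht
      apply pow_nonneg
      have hF0 : F t = 1 - Real.exp (-∫ s in (0:ℝ)..t, h s) := hF t ht.1
      rw [hF0]
      have hB0 : 0 ≤ ∫ s in (0:ℝ)..t, h s := by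
        apply intervalIntegral.integral_nonneg ht.1
        intro s hs; exact hh0 s hs.1
      have : Real.exp (-∫ s in (0:ℝ)..t, h s) ≤ 1 := Real.exp_le_one_iff.mpr (by linarith)
      linarith
    linarith [hFTC2, hcomp]
  -- the numeric bound: F r ^ m ≤ F r / (k + 1)
  have he : (2:ℝ) < Real.exp 1 := by
    have := Real.exp_one_gt_d9
    linarith
  set b : ℝ := Real.exp 1 / (Real.exp 1 - 1) with hbdef
  have hb1 : 1 < b := by
    rw [hbdef, lt_div_iff₀ (by linarith)]
    linarith
  have hb0 : 0 < b := by linarith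
  have hαb : 1 - Real.exp (-1) = b⁻¹ := by
    have hene : Real.exp 1 - 1 ≠ 0 := ne_of_gt (by linarith)
    have hene' : Real.exp 1 ≠ 0 := ne_of_gt (Real.exp_pos 1)
    rw [hbdef, Real.exp_neg]
    field_simp
  have h2k : (0:ℝ) < 2 * (k:ℝ) := by
    have : (1:ℝ) ≤ (k:ℝ) := by exact_mod_cast hk
    linarith
  have hlogb0 : 0 ≤ Real.logb b (2 * (k:ℝ)) := by
    apply Real.logb_nonneg hb1
    have : (1:ℝ) ≤ (k:ℝ) := by exact_mod_cast hk
    linarith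
  have hm2 : 2 ≤ m := by
    have : (2:ℝ) ≤ (m:ℝ) := by linarith
    exact_mod_cast this
  obtain ⟨m', hm'⟩ : ∃ m', m = m' + 1 := ⟨m - 1, by omega⟩
  have hm'real : Real.logb b (2 * (k:ℝ)) + 1 ≤ (m' : ℝ) := by
    have : ((m' : ℝ) + 1) = (m : ℝ) := by rw [hm']; push_cast; ring
    linarith
  have hbm' : 2 * (k:ℝ) ≤ b ^ m' := by
    have h1 : (2 * (k:ℝ)) * b ≤ b ^ ((m' : ℝ) : ℝ) := by
      calc (2 * (k:ℝ)) * b = b ^ Real.logb b (2 * (k:ℝ)) * b ^ (1:ℝ) := by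
            rw [Real.rpow_logb hb0 hb1.ne' h2k, Real.rpow_one]
      _ = b ^ (Real.logb b (2 * (k:ℝ)) + 1) := by rw [← Real.rpow_add hb0]
      _ ≤ b ^ ((m' : ℝ) : ℝ) := by
            exact (Real.rpow_le_rpow_left_iff hb1).mpr hm'real
    rw [Real.rpow_natCast] at h1
    have h2 : 2*(k:ℝ) * 1 ≤ 2*(k:ℝ) * b := by
      apply mul_le_mul_of_nonneg_left hb1.le (by linarith)
    linarith
  have hkk : (k:ℝ) + 1 ≤ b ^ m' := by
    have h1 : ((k:ℝ) + 1) ≤ 2 * (k:ℝ) := by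
      have : (1:ℝ) ≤ (k:ℝ) := by exact_mod_cast hk
      linarith
    linarith
  have hαm' : (1 - Real.exp (-1)) ^ m' ≤ 1 / ((k:ℝ) + 1) := by
    rw [hαb, inv_pow]
    have hkpos : (0:ℝ) < (k:ℝ) + 1 := by positivity
    have := one_div_le_one_div_of_le hkpos hkk
    simpa [one_div] using this
  have hnum : F r ^ m ≤ F r / ((k:ℝ) + 1) := by
    rw [hm', pow_succ]
    have h1 : F r ^ m' ≤ (1 - Real.exp (-1)) ^ m' := pow_le_pow_left₀ hφ0 hφα m'
    have h2 : F r ^ m' ≤ 1 / ((k:ℝ) + 1) := le_trans h1 hαm'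
    calc F r ^ m' * F r ≤ (1 / ((k:ℝ)+1)) * F r := by
          apply mul_le_mul_of_nonneg_right h2 hφ0
    _ = F r / ((k:ℝ)+1) := by ring
  -- finish
  rw [hIBP]
  have heq : (1/(F r)^k) * (r * F r ^ k - J) = r - J/(F r)^k := by
    field_simp
  rw [heq]
  have hfin : r * F r ^ m ≤ J / (F r)^k := by
    rw [le_div_iff₀ hφk]
    calc r * F r ^ m * F r ^ k ≤ r * (F r / ((k:ℝ)+1)) * F r ^ k := by
          apply mul_le_mul_of_nonneg_right _ (le_of_lt hφk)
          exact mul_le_mul_of_nonneg_left hnum hr.le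
    _ = (r/((k:ℝ)+1)) * F r ^ (k+1) := by ring
    _ ≤ J := hJlow
  linarith
end

section
/- Let 0 < φ ≤ 1 - 1/e, t' ≥ 1 and ε > 0. There exists M such that for all m ≥ M, if s ≥ t' + (1+ε)·t'·log m + log t', then for every integer j with 0 ≤ j ≤ t'-1: C(m+s, j)·φ^{m+s-j}·(1-φ)^j·(t'-j) ≤ φ^m, where C(n,j) is the binomial coefficient. -/
open Real

set_option maxHeartbeats 4000000 in
/-- Multi-item bound on binomial tail terms: for `s ≥ t' + (1+ε) t' log m + log t'`
(logs to base `e/(e-1)`) and `m` large enough,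
`C(m+s, j)·φ^{m+s-j}·(1-φ)^j·(t'-j) ≤ φ^m` for every `0 ≤ j ≤ t'-1`. -/
theorem stmt_16 (φ : ℝ) (hφ0 : 0 < φ) (hφ : φ ≤ 1 - 1 / Real.exp 1)
    (t' : ℕ) (ht' : 1 ≤ t') (ε : ℝ) (hε : 0 < ε) :
    ∃ M : ℕ, ∀ m : ℕ, M ≤ m → ∀ s : ℕ,
      (t' : ℝ) + (1 + ε) * t' * Real.logb (Real.exp 1 / (Real.exp 1 - 1)) m
          + Real.logb (Real.exp 1 / (Real.exp 1 - 1)) t' ≤ (s : ℝ) →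
      ∀ j : ℕ, j ≤ t' - 1 →
        ((m + s).choose j : ℝ) * φ ^ (m + s - j) * (1 - φ) ^ j * ((t' : ℝ) - j)
          ≤ φ ^ m := by
  have he1 : (1:ℝ) < Real.exp 1 := by
    have := Real.exp_one_gt_d9; linarith
  have he2 : (2:ℝ) < Real.exp 1 := by
    have := Real.exp_one_gt_d9; linarith
  set b : ℝ := Real.exp 1 / (Real.exp 1 - 1) with hb_def
  have hb1 : 1 < b := by
    rw [hb_def, lt_div_iff₀ (by linarith)]; linarith
  have hblt : b < Real.exp 1 := by
    rw [hb_def, div_lt_iff₀ (by linarith)]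
    nlinarith
  have hlb0 : 0 < Real.log b := Real.log_pos hb1
  have hlb1 : Real.log b < 1 := by
    calc Real.log b < Real.log (Real.exp 1) := Real.log_lt_log (by linarith) hblt
      _ = 1 := Real.log_exp 1
  set lb := Real.log b with hlb_def
  set δ : ℝ := ε / (2*(1+ε)) with hδ_def
  have hδ0 : 0 < δ := by
    apply div_pos hε; linarith
  have h2δ : 2*δ ≤ ε := by
    have h : (0:ℝ) < 2*(1+ε) := by linarith
    rw [hδ_def, show (2:ℝ)*(ε/(2*(1+ε))) = (2*ε)/(2*(1+ε)) by ring,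
      div_le_iff₀ h]
    nlinarith
  have hδhalf : δ < 1/2 := by
    rw [hδ_def, div_lt_iff₀ (by linarith)]; nlinarith
  set K : ℝ := 2*t'/(δ*lb) with hK_def
  have ht0 : (1:ℝ) ≤ (t':ℝ) := by exact_mod_cast ht'
  have hK0 : 0 ≤ K := by positivity
  refine ⟨⌈Real.exp (K^2)⌉₊ + 8, ?_⟩
  intro m hm s hs j hj
  -- basic facts about φ
  have hφb : φ ≤ 1/b := by
    have : (1:ℝ)/b = 1 - 1/Real.exp 1 := by
      rw [hb_def]; field_simp
    linarith
  have hφ1 : φ < 1 := by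
    have : (0:ℝ) < 1/Real.exp 1 := by positivity
    linarith
  -- facts about m
  have hm8 : (8:ℝ) ≤ (m:ℝ) := by
    have : 8 ≤ m := by omega
    exact_mod_cast this
  have hm0 : (0:ℝ) < (m:ℝ) := by linarith
  have hexpKm : Real.exp (K^2) ≤ (m:ℝ) := by
    have h1 : Real.exp (K^2) ≤ (⌈Real.exp (K^2)⌉₊ : ℝ) := Nat.le_ceil _
    have h2 : (⌈Real.exp (K^2)⌉₊ : ℝ) ≤ (m:ℝ) := by
      have : ⌈Real.exp (K^2)⌉₊ ≤ m := by omega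
      exact_mod_cast this
    linarith
  have hlogm2 : 2 ≤ Real.log m := by
    rw [Real.le_log_iff_exp_le hm0]
    have : Real.exp 2 = Real.exp 1 * Real.exp 1 := by
      rw [← Real.exp_add]; norm_num
    have h9 := Real.exp_one_lt_d9
    nlinarith
  have hlogm0 : 0 ≤ Real.log m := by linarith
  have hlogmK : K^2 ≤ Real.log m := (Real.le_log_iff_exp_le hm0).2 hexpKm
  -- facts about t'
  have hlt0 : 0 ≤ Real.log t' := Real.log_nonneg ht0
  have hltT : Real.log t' ≤ (t':ℝ) := by
    have := Real.log_le_sub_one_of_pos (x := (t':ℝ)) (by linarith)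
    linarith
  -- rewrite the hypothesis on s
  have hs' : (t':ℝ) + (1+ε)*t'*(Real.log m / lb) + Real.log t' / lb ≤ (s:ℝ) := by
    simpa [Real.logb, hlb_def] using hs
  have hs2 : (t':ℝ)*lb + (1+ε)*t'*Real.log m + Real.log t' ≤ (s:ℝ)*lb := by
    have h := mul_le_mul_of_nonneg_right hs' hlb0.le
    have e1 : ((t':ℝ) + (1+ε)*t'*(Real.log m / lb) + Real.log t' / lb) * lb
        = (t':ℝ)*lb + (1+ε)*t'*Real.log m + Real.log t' := by
      field_simp
    rw [e1] at h; exact h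
  -- s is reasonably large
  have hmd0 : 0 ≤ (1+ε)*t'*(Real.log m / lb) := by positivity
  have hld0 : 0 ≤ Real.log t' / lb := by positivity
  have hsT : (t':ℝ) ≤ (s:ℝ) := by linarith
  have htsn : t' ≤ s := by exact_mod_cast hsT
  have hjt' : j + 1 ≤ t' := by omega
  have hjs : j ≤ s := by omega
  have hjT : (j:ℝ) ≤ (t':ℝ) - 1 := by
    have : (j:ℝ) + 1 ≤ (t':ℝ) := by exact_mod_cast hjt'
    linarith
  have hjT' : (j:ℝ) ≤ (t':ℝ) := by linarith
  have hj0 : (0:ℝ) ≤ (j:ℝ) := by positivity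
  have hs0 : (0:ℝ) ≤ (s:ℝ) := by positivity
  have hslogm : Real.log m ≤ (s:ℝ) := by
    have h0 : (1:ℝ) ≤ (1+ε)*t' := by nlinarith
    have h1 : Real.log m ≤ (1+ε)*t'*Real.log m := by
      nlinarith [mul_le_mul_of_nonneg_right h0 hlogm0]
    have h2 : (s:ℝ)*lb ≤ (s:ℝ) := by
      nlinarith [mul_le_mul_of_nonneg_left hlb1.le hs0]
    nlinarith
  have hs2' : (2:ℝ) ≤ (s:ℝ) := le_trans hlogm2 hslogm
  have hsK2 : K^2 ≤ (s:ℝ) := le_trans hlogmK hslogm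
  have hsqrtK : K ≤ Real.sqrt s := (Real.le_sqrt hK0 hs0).2 hsK2
  have hsq0 : (0:ℝ) < Real.sqrt s := Real.sqrt_pos.2 (by linarith)
  have hlogs2 : Real.log s ≤ 2 * Real.sqrt s := by
    have h1 := Real.log_le_sub_one_of_pos hsq0
    have h2 : Real.log (Real.sqrt s) = Real.log s / 2 := Real.log_sqrt hs0
    linarith
  have hlogs0 : 0 ≤ Real.log s := Real.log_nonneg (by linarith)
  -- the self-bounding estimate  t' log s ≤ δ lb s
  have hKdl : δ*lb*K = 2*(t':ℝ) := by
    rw [hK_def]; field_simp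
  have hss : (t':ℝ) * Real.log s ≤ δ * lb * (s:ℝ) := by
    have h1 : (t':ℝ) * Real.log s ≤ (t':ℝ) * (2 * Real.sqrt s) :=
      mul_le_mul_of_nonneg_left hlogs2 (by linarith)
    have h3 : Real.sqrt s * Real.sqrt s = (s:ℝ) := Real.mul_self_sqrt hs0
    have h2 : δ*lb*(K*Real.sqrt s) ≤ δ*lb*(Real.sqrt s*Real.sqrt s) :=
      mul_le_mul_of_nonneg_left (mul_le_mul_of_nonneg_right hsqrtK hsq0.le)
        (by positivity)
    calc (t':ℝ)*Real.log s ≤ (t':ℝ)*(2*Real.sqrt s) := h1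
      _ = δ*lb*(K*Real.sqrt s) := by
          linear_combination (-Real.sqrt (s:ℝ)) * hKdl
      _ ≤ δ*lb*(Real.sqrt s*Real.sqrt s) := h2
      _ = δ*lb*(s:ℝ) := by rw [h3]
  -- log (m+s) ≤ log m + log s
  have hms : Real.log ((m:ℝ)+(s:ℝ)) ≤ Real.log m + Real.log s := by
    have h1 : (m:ℝ)+(s:ℝ) ≤ (m:ℝ)*(s:ℝ) := by nlinarith
    have h2 : Real.log ((m:ℝ)+(s:ℝ)) ≤ Real.log ((m:ℝ)*(s:ℝ)) :=
      Real.log_le_log (by linarith) h1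
    rw [Real.log_mul (by linarith) (by linarith)] at h2
    exact h2
  have hms0 : 0 ≤ Real.log ((m:ℝ)+(s:ℝ)) := Real.log_nonneg (by linarith)
  -- core inequality
  have hδε : (1-δ)*(1+ε) = 1 + ε/2 := by
    rw [hδ_def]; field_simp; ring
  have hT0 : (0:ℝ) ≤ (t':ℝ) := by linarith
  have hTlb : (t':ℝ)*lb ≤ (t':ℝ) := by
    have := mul_le_mul_of_nonneg_left hlb1.le hT0
    simpa using this
  have h4 : δ*((t':ℝ)*lb + Real.log t') ≤ (ε/2)*((t':ℝ)*Real.log m) := by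
    have a1 : (t':ℝ)*lb + Real.log t' ≤ 2*(t':ℝ) := by linarith
    have a2 : δ*((t':ℝ)*lb + Real.log t') ≤ δ*(2*(t':ℝ)) :=
      mul_le_mul_of_nonneg_left a1 hδ0.le
    have a4 : (2*δ)*(t':ℝ) ≤ ε*(t':ℝ) := mul_le_mul_of_nonneg_right h2δ hT0
    have a6 : (t':ℝ)*2 ≤ (t':ℝ)*Real.log m := mul_le_mul_of_nonneg_left hlogm2 hT0
    have a7 : (ε/2)*((t':ℝ)*2) ≤ (ε/2)*((t':ℝ)*Real.log m) :=
      mul_le_mul_of_nonneg_left a6 (by linarith)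
    linarith only [a2, a4, a7]
  have h5 : (t':ℝ)*Real.log m + Real.log t' + (t':ℝ)*lb ≤ (1-δ)*((s:ℝ)*lb) := by
    have h := mul_le_mul_of_nonneg_left hs2 (by linarith : (0:ℝ) ≤ 1-δ)
    have e : (1-δ)*((t':ℝ)*lb + (1+ε)*t'*Real.log m + Real.log t')
        = (t':ℝ)*lb + (1+ε/2)*((t':ℝ)*Real.log m) + Real.log t'
          - δ*((t':ℝ)*lb + Real.log t') := by
      linear_combination ((t':ℝ)*Real.log m) * hδε
    rw [e] at h
    linarith
  have hcore : (t':ℝ)*Real.log m + (t':ℝ)*Real.log s + Real.log t' + (t':ℝ)*lb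
      ≤ (s:ℝ)*lb := by
    have e2 : (1-δ)*((s:ℝ)*lb) + δ*lb*(s:ℝ) = (s:ℝ)*lb := by ring
    linarith [h5, hss]
  have key : (j:ℝ) * Real.log ((m:ℝ)+(s:ℝ)) + Real.log t'
      ≤ ((s:ℝ) - (j:ℝ)) * lb := by
    have h1 : (j:ℝ) * Real.log ((m:ℝ)+(s:ℝ)) ≤ (t':ℝ) * (Real.log m + Real.log s) :=
      mul_le_mul hjT' hms hms0 (by linarith)
    have h2 : (j:ℝ)*lb ≤ (t':ℝ)*lb := mul_le_mul_of_nonneg_right hjT' hlb0.le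
    have e3 : ((s:ℝ) - (j:ℝ))*lb = (s:ℝ)*lb - (j:ℝ)*lb := by ring
    rw [e3]
    linarith [h1, h2, hcore]
  -- exponentiate: (m+s)^j * t' ≤ b^(s-j)
  have hb0 : (0:ℝ) < b := by linarith
  have hms0' : (0:ℝ) < (m:ℝ)+(s:ℝ) := by linarith
  have hkey2 : ((m:ℝ)+(s:ℝ))^j * (t':ℝ) ≤ b^(s-j) := by
    have hX0 : (0:ℝ) < ((m:ℝ)+(s:ℝ))^j * (t':ℝ) :=
      mul_pos (pow_pos hms0' _) (by linarith)
    have hY0 : (0:ℝ) < b^(s-j) := pow_pos hb0 _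
    rw [← Real.log_le_log_iff hX0 hY0]
    rw [Real.log_mul (ne_of_gt (pow_pos hms0' _)) (by linarith), Real.log_pow,
      Real.log_pow]
    have hc : ((s-j : ℕ):ℝ) = (s:ℝ) - (j:ℝ) := by
      rw [Nat.cast_sub hjs]
    rw [hc]
    calc (j:ℝ) * Real.log ((m:ℝ)+(s:ℝ)) + Real.log t' ≤ ((s:ℝ) - (j:ℝ)) * lb := key
      _ = ((s:ℝ) - (j:ℝ)) * Real.log b := by rw [hlb_def]
  -- now assemble the final bound
  have hφpow : φ^(s-j) ≤ (1/b)^(s-j) := pow_le_pow_left₀ hφ0.le hφb _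
  have hC : ((m + s).choose j : ℝ) ≤ ((m:ℝ)+(s:ℝ))^j := by
    have h := Nat.choose_le_pow (m+s) j
    have : (((m+s)^j : ℕ):ℝ) = ((m:ℝ)+(s:ℝ))^j := by push_cast; ring
    rw [← this]
    exact_mod_cast h
  have hsplit : m + s - j = m + (s - j) := by omega
  rw [hsplit, pow_add]
  have hre : ((m + s).choose j : ℝ) * (φ^m * φ^(s-j)) * (1-φ)^j * ((t':ℝ) - j)
      = φ^m * (((m + s).choose j : ℝ) * φ^(s-j) * ((1-φ)^j * ((t':ℝ) - j))) := by
    ring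
  rw [hre]
  have hinner : ((m + s).choose j : ℝ) * φ^(s-j) * ((1-φ)^j * ((t':ℝ) - j)) ≤ 1 := by
    have h₁ : ((m + s).choose j : ℝ) * φ^(s-j) ≤ ((m:ℝ)+(s:ℝ))^j * (1/b)^(s-j) :=
      mul_le_mul hC hφpow (pow_nonneg hφ0.le _) (pow_nonneg hms0'.le _)
    have h₂ : (1-φ)^j * ((t':ℝ) - j) ≤ 1 * (t':ℝ) := by
      have hp1 : (1-φ)^j ≤ 1 := pow_le_one₀ (by linarith) (by linarith)
      have : (t':ℝ) - j ≤ (t':ℝ) := by linarith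
      exact mul_le_mul hp1 this (by linarith) zero_le_one
    have h₃ : ((m + s).choose j : ℝ) * φ^(s-j) * ((1-φ)^j * ((t':ℝ) - j))
        ≤ ((m:ℝ)+(s:ℝ))^j * (1/b)^(s-j) * (1 * (t':ℝ)) := by
      have c1 : (0:ℝ) ≤ (1-φ)^j * ((t':ℝ) - j) :=
        mul_nonneg (pow_nonneg (by linarith) _) (by linarith)
      have c2 : (0:ℝ) ≤ ((m:ℝ)+(s:ℝ))^j * (1/b)^(s-j) :=
        mul_nonneg (pow_nonneg hms0'.le _)
          (pow_nonneg (le_of_lt (one_div_pos.mpr hb0)) _)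
      exact mul_le_mul h₁ h₂ c1 c2
    have h₄ : ((m:ℝ)+(s:ℝ))^j * (1/b)^(s-j) * (1 * (t':ℝ))
        = (((m:ℝ)+(s:ℝ))^j * (t':ℝ)) / b^(s-j) := by
      rw [one_div, inv_pow]; ring
    rw [h₄] at h₃
    have h₅ : (((m:ℝ)+(s:ℝ))^j * (t':ℝ)) / b^(s-j) ≤ 1 := by
      rw [div_le_one (pow_pos hb0 _)]
      exact hkey2
    linarith
  calc φ^m * (((m + s).choose j : ℝ) * φ^(s-j) * ((1-φ)^j * ((t':ℝ) - j)))
      ≤ φ^m * 1 := by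
        exact mul_le_mul_of_nonneg_left hinner (pow_nonneg hφ0.le _)
    _ = φ^m := mul_one _
end

section
/- Let D be an MHR distribution with reserve price r and φ = F_D(r) ∈ [0, 1-1/e]. Then for every k ≥ 1, ∫_0^r x·d(F_D(x)^k) ≤ r·(φ^k + ln(1-φ) + Σ_{i=1}^{k} φ^i / i) when φ < 1, with the right-hand side interpreted as 0 when φ = 0. -/
open Real MeasureTheory

/-- Loss bound: for any MHR distribution with cdf `F`, density `f`, hazard rate `h`,
reserve price `r` and `φ = F r`, the truncated expected maximum of `k` i.i.d. draws
satisfies `∫_0^r x d(F^k) ≤ r(φ^k + ln(1-φ) + Σ_{i=1}^k φ^i/i)`. -/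
theorem stmt_19 (k : ℕ) (hk : 1 ≤ k)
    (f F h : ℝ → ℝ)
    (hf0 : ∀ x, 0 ≤ f x)
    (hhaz : ∀ x ∈ Set.Ici (0:ℝ), h x = f x / (1 - F x))
    (hmono : MonotoneOn h (Set.Ici 0))
    (hF : ∀ x ∈ Set.Ici (0:ℝ), F x = 1 - Real.exp (-∫ t in (0:ℝ)..x, h t))
    (hinth : ∀ x : ℝ, IntervalIntegrable h volume 0 x)
    (r : ℝ) (hr : 0 < r) (hres : h r = 1 / r)
    (hφmem : F r ∈ Set.Icc 0 (1 - 1 / Real.exp 1))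
    (hderiv : ∀ x ∈ Set.Icc (0:ℝ) r, HasDerivAt F (f x) x)
    (hint : IntervalIntegrable (fun x => x * ((k : ℝ) * F x ^ (k - 1) * f x)) volume 0 r) :
    ∫ x in (0:ℝ)..r, x * ((k : ℝ) * F x ^ (k - 1) * f x)
      ≤ r * ((F r) ^ k + Real.log (1 - F r)
          + ∑ i ∈ Finset.range k, (F r) ^ (i + 1) / ((i : ℝ) + 1)) := by
  have hrle := hr.le
  have hrne : r ≠ 0 := hr.ne'
  obtain ⟨hφ0, hφ1⟩ := hφmem
  set φ := F r with hφdef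
  have hexp1 : (0:ℝ) < 1 / Real.exp 1 := by positivity
  have h1φ : 0 < 1 - φ := by linarith
  have hlognp : Real.log (1 - φ) ≤ 0 := Real.log_nonpos (by linarith) (by linarith)
  have hlogge : -1 ≤ Real.log (1 - φ) := by
    have h2 : Real.exp (-1) ≤ 1 - φ := by
      rw [Real.exp_neg, ← one_div]
      linarith
    calc (-1:ℝ) = Real.log (Real.exp (-1)) := (Real.log_exp _).symm
      _ ≤ Real.log (1 - φ) := Real.log_le_log (Real.exp_pos _) h2
  set c := r * (1 + Real.log (1 - φ)) with hcdef
  have hc0 : 0 ≤ c := by nlinarith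
  have hcr : c ≤ r := by nlinarith
  set H : ℝ → ℝ := fun x => ∫ s in (0:ℝ)..x, h s with hHdef
  have hFeq : ∀ x, 0 ≤ x → F x = 1 - Real.exp (-(H x)) := fun x hx => hF x hx
  have hhnn : ∀ x, 0 ≤ x → 0 ≤ h x := by
    intro x hx
    rw [hhaz x hx]
    have h1 : 1 - F x = Real.exp (-(H x)) := by rw [hFeq x hx]; ring
    rw [h1]
    exact div_nonneg (hf0 x) (Real.exp_pos _).le
  have hHnn : ∀ x ∈ Set.Icc (0:ℝ) r, 0 ≤ H x := by
    intro x hx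
    exact intervalIntegral.integral_nonneg hx.1 (fun s hs => hhnn s hs.1)
  have hHr : H r = -Real.log (1 - φ) := by
    have h1 : Real.exp (-(H r)) = 1 - φ := by
      have h2 := hFeq r hrle
      rw [← hφdef] at h2
      linarith
    have h3 := congrArg Real.log h1
    rw [Real.log_exp] at h3
    linarith
  have hHlb : ∀ x ∈ Set.Icc (0:ℝ) r, (x - c)/r ≤ H x := by
    intro x hx
    have hint_xr : IntervalIntegrable h volume x r := (hinth x).symm.trans (hinth r)
    have hsplit : H x + ∫ s in x..r, h s = H r :=
      intervalIntegral.integral_add_adjacent_intervals (hinth x) hint_xr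
    have hub : ∫ s in x..r, h s ≤ ∫ s in x..r, (1/r : ℝ) := by
      apply intervalIntegral.integral_mono_on hx.2 hint_xr intervalIntegrable_const
      intro s hs
      rw [← hres]
      exact hmono (Set.mem_Ici.mpr (le_trans hx.1 hs.1)) (Set.mem_Ici.mpr hrle) hs.2
    have hconst : ∫ s in x..r, (1/r : ℝ) = (r - x) * (1/r) := by
      simp [smul_eq_mul]
    rw [hconst] at hub
    have heq : (x - c)/r = -Real.log (1 - φ) - (r - x) * (1/r) := by
      rw [hcdef]; field_simp; ring
    linarith [hsplit, hub, hHr]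
  set G : ℝ → ℝ := fun x => 1 - Real.exp ((c - x)/r) with hGdef
  have hGcont : Continuous G := by fun_prop
  have hGF : ∀ x ∈ Set.Icc (0:ℝ) r, G x ≤ F x := by
    intro x hx
    rw [hFeq x hx.1]
    have h1 : Real.exp (-(H x)) ≤ Real.exp ((c - x)/r) := by
      apply Real.exp_le_exp.mpr
      have h2 : (c - x)/r = -((x - c)/r) := by ring
      rw [h2]
      linarith [hHlb x hx]
    show 1 - Real.exp ((c - x)/r) ≤ 1 - Real.exp (-(H x))
    linarith
  have hFnn : ∀ x ∈ Set.Icc (0:ℝ) r, 0 ≤ F x := by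
    intro x hx
    rw [hFeq x hx.1]
    have h1 : Real.exp (-(H x)) ≤ 1 := by
      have h2 := Real.exp_le_exp.mpr (show -(H x) ≤ 0 by linarith [hHnn x hx])
      simpa using h2
    linarith
  have hGnn : ∀ x ∈ Set.Icc c r, 0 ≤ G x := by
    intro x hx
    have h1 : Real.exp ((c - x)/r) ≤ 1 := by
      have h2 := Real.exp_le_exp.mpr
        (show (c - x)/r ≤ 0 from div_nonpos_of_nonpos_of_nonneg (by linarith [hx.1]) hrle)
      simpa using h2
    show 0 ≤ 1 - Real.exp ((c - x)/r)
    linarith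
  have hGr : G r = φ := by
    show 1 - Real.exp ((c - r)/r) = φ
    have h1 : (c - r)/r = Real.log (1 - φ) := by
      rw [hcdef]; field_simp; ring
    rw [h1, Real.exp_log h1φ]; ring
  have hGc : G c = 0 := by
    show 1 - Real.exp ((c - c)/r) = 0
    simp
  have hG' : ∀ x : ℝ, HasDerivAt G ((1 - G x)/r) x := by
    intro x
    have h1 : HasDerivAt (fun y : ℝ => (c - y)/r) (-1/r) x := by
      have h0 := ((hasDerivAt_id x).const_sub c).div_const r
      simpa using h0
    have h2 : HasDerivAt (fun y : ℝ => Real.exp ((c - y)/r))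
        (Real.exp ((c - x)/r) * (-1/r)) x :=
      h1.exp
    have h3 := h2.const_sub 1
    refine h3.congr_deriv (Eq.symm ?_)
    show (1 - G x)/r = -(Real.exp ((c - x)/r) * (-1/r))
    have h4 : G x = 1 - Real.exp ((c - x)/r) := rfl
    rw [h4]; ring
  have hA : ∀ x : ℝ, HasDerivAt
      (fun y => (y - c) - r * ∑ i ∈ Finset.range k, G y ^ (i+1) / ((i:ℝ)+1))
      (G x ^ k) x := by
    intro x
    have hterm : ∀ i ∈ Finset.range k, HasDerivAt (fun y => G y ^ (i+1) / ((i:ℝ)+1))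
        (G x ^ i * ((1 - G x)/r)) x := by
      intro i _
      have h1 := ((hG' x).pow (i+1)).div_const ((i:ℝ)+1)
      refine h1.congr_deriv (Eq.symm ?_)
      have h2 : ((i:ℝ)+1) ≠ 0 := by positivity
      push_cast
      field_simp
    have hsum := HasDerivAt.fun_sum hterm
    have h3 := ((hasDerivAt_id x).sub_const c).sub (hsum.const_mul r)
    refine h3.congr_deriv (Eq.symm ?_)
    have h4 : r * (∑ i ∈ Finset.range k, G x ^ i * ((1 - G x)/r))
        = (∑ i ∈ Finset.range k, G x ^ i) * (1 - G x) := by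
      rw [← Finset.sum_mul]
      field_simp
    rw [h4]
    have key : ∀ g : ℝ, g ^ k = 1 - (∑ i ∈ Finset.range k, g ^ i) * (1 - g) := by
      intro g; linear_combination -geom_sum_mul g k
    exact key (G x)
  have hGint : IntervalIntegrable (fun x => G x ^ k) volume c r :=
    (hGcont.pow k).intervalIntegrable _ _
  have hGval : ∫ x in c..r, G x ^ k
      = -(r * Real.log (1 - φ)) - r * ∑ i ∈ Finset.range k, φ ^ (i+1) / ((i:ℝ)+1) := by
    rw [intervalIntegral.integral_eq_sub_of_hasDerivAt (fun x _ => hA x) hGint]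
    rw [hGr, hGc]
    have hz : ∑ i ∈ Finset.range k, (0:ℝ) ^ (i+1) / ((i:ℝ)+1) = 0 :=
      Finset.sum_eq_zero (fun i _ => by simp)
    rw [hz, hcdef]; ring
  have hcontF : ContinuousOn F (Set.Icc 0 r) :=
    fun x hx => ((hderiv x hx).continuousAt).continuousWithinAt
  have hFkint : IntervalIntegrable (fun x => F x ^ k) volume 0 r := by
    apply ContinuousOn.intervalIntegrable
    rw [Set.uIcc_of_le hrle]
    exact hcontF.pow k
  have hFkint1 : IntervalIntegrable (fun x => F x ^ k) volume 0 c :=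
    hFkint.mono_set (by
      rw [Set.uIcc_of_le hrle, Set.uIcc_of_le hc0]
      exact Set.Icc_subset_Icc le_rfl hcr)
  have hFkint2 : IntervalIntegrable (fun x => F x ^ k) volume c r :=
    hFkint.mono_set (by
      rw [Set.uIcc_of_le hrle, Set.uIcc_of_le hcr]
      exact Set.Icc_subset_Icc hc0 le_rfl)
  have hlow : ∫ x in c..r, G x ^ k ≤ ∫ x in (0:ℝ)..r, F x ^ k := by
    have hsplit : (∫ x in (0:ℝ)..c, F x ^ k) + ∫ x in c..r, F x ^ k
        = ∫ x in (0:ℝ)..r, F x ^ k :=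
      intervalIntegral.integral_add_adjacent_intervals hFkint1 hFkint2
    have h1 : 0 ≤ ∫ x in (0:ℝ)..c, F x ^ k :=
      intervalIntegral.integral_nonneg hc0
        (fun x hx => pow_nonneg (hFnn x ⟨hx.1, hx.2.trans hcr⟩) k)
    have h2 : ∫ x in c..r, G x ^ k ≤ ∫ x in c..r, F x ^ k := by
      apply intervalIntegral.integral_mono_on hcr hGint hFkint2
      intro x hx
      exact pow_le_pow_left₀ (hGnn x hx) (hGF x ⟨hc0.trans hx.1, hx.2⟩) k
    linarith
  have hIBP : ∫ x in (0:ℝ)..r, (F x ^ k + x * ((k:ℝ) * F x ^ (k-1) * f x)) = r * φ ^ k := by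
    have hd : ∀ x ∈ Set.uIcc (0:ℝ) r, HasDerivAt (fun y => y * F y ^ k)
        (F x ^ k + x * ((k:ℝ) * F x ^ (k-1) * f x)) x := by
      intro x hx
      rw [Set.uIcc_of_le hrle] at hx
      have h1 := (hasDerivAt_id x).mul ((hderiv x hx).pow k)
      exact h1.congr_deriv (by simp)
    rw [intervalIntegral.integral_eq_sub_of_hasDerivAt hd (hFkint.add hint)]
    simp [← hφdef]
  have hadd : ∫ x in (0:ℝ)..r, (F x ^ k + x * ((k:ℝ) * F x ^ (k-1) * f x))
      = (∫ x in (0:ℝ)..r, F x ^ k) + ∫ x in (0:ℝ)..r, x * ((k:ℝ) * F x ^ (k-1) * f x) :=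
    intervalIntegral.integral_add hFkint hint
  have hfin : ∫ x in (0:ℝ)..r, x * ((k:ℝ) * F x ^ (k-1) * f x)
      = r * φ ^ k - ∫ x in (0:ℝ)..r, F x ^ k := by
    rw [hadd] at hIBP; linarith
  rw [hfin]
  have hexpand : r * (φ ^ k + Real.log (1 - φ)
      + ∑ i ∈ Finset.range k, φ ^ (i+1) / ((i:ℝ)+1))
      = r * φ ^ k + r * Real.log (1 - φ)
        + r * ∑ i ∈ Finset.range k, φ ^ (i+1) / ((i:ℝ)+1) := by ring
  rw [hexpand]
  linarith [hlow, hGval]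
end
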